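/- Commutator bound for the multiplier A = M⟨D⟩^N. Let N ≥ 1 be real and C₀ > 0, and let M : ℤ × ℝ → (0,1] be C¹ in its second argument with |∂_ξ M(k,ξ)| ≤ C₀/|k| for all integers k ≠ 0 and all ξ ∈ ℝ. Define A(k,ξ) = M(k,ξ)(1 + k² + ξ²)^{N/2}. Then there exists C = C(N, C₀) such that for all k ≠ 0 and all ξ, η ∈ ℝ: |k| · |A(k,ξ) − A(k, ξ−η)| ≤ C ( (1 + k² + (ξ−η)²)^{N/2} + (1 + k² + ξ²)^{N/2} ) |η|. -/

import Mathlib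

open Set

/-- **Commutator bound for the multiplier `A = M⟨D⟩^N`.**
If `M : ℤ × ℝ → (0,1]` is `C¹` in `ξ` with `|∂_ξ M(k,ξ)| ≤ C₀/|k|` for `k ≠ 0`, and
`A(k,ξ) = M(k,ξ)(1+k²+ξ²)^(N/2)`, then there is `C = C(N,C₀)` with
`|k| |A(k,ξ) − A(k,ξ−η)| ≤ C ((1+k²+(ξ−η)²)^(N/2) + (1+k²+ξ²)^(N/2)) |η|` for `k ≠ 0`. -/
theorem stmt14 (N C₀ : ℝ) (hN : 1 ≤ N) (hC₀ : 0 < C₀) :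
    ∃ C : ℝ, 0 < C ∧
      ∀ M : ℤ → ℝ → ℝ,
        (∀ k : ℤ, ContDiff ℝ 1 (M k)) →
        (∀ (k : ℤ) (ξ : ℝ), M k ξ ∈ Ioc (0 : ℝ) 1) →
        (∀ k : ℤ, k ≠ 0 → ∀ ξ : ℝ, |deriv (M k) ξ| ≤ C₀ / |(k : ℝ)|) →
        ∀ k : ℤ, k ≠ 0 → ∀ ξ η : ℝ,
          |(k : ℝ)| * |M k ξ * (1 + (k : ℝ) ^ 2 + ξ ^ 2) ^ (N / 2)
              - M k (ξ - η) * (1 + (k : ℝ) ^ 2 + (ξ - η) ^ 2) ^ (N / 2)|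
            ≤ C * ((1 + (k : ℝ) ^ 2 + (ξ - η) ^ 2) ^ (N / 2)
                + (1 + (k : ℝ) ^ 2 + ξ ^ 2) ^ (N / 2)) * |η| := by
  refine ⟨C₀ + N, by linarith, ?_⟩
  intro M hM hMrange hM' k hk ξ η
  have hkabs : (1 : ℝ) ≤ |(k : ℝ)| := by
    have : (1 : ℤ) ≤ |k| := Int.one_le_abs (by exact_mod_cast hk)
    calc (1:ℝ) ≤ (|k| : ℤ) := by exact_mod_cast this
    _ = |(k:ℝ)| := by push_cast; simp
  have hkpos : (0:ℝ) < |(k:ℝ)| := lt_of_lt_of_le one_pos hkabs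
  have hw : ∀ ζ : ℝ, 0 < 1 + (k:ℝ)^2 + ζ^2 := fun ζ => by positivity
  set f : ℝ → ℝ := fun ζ => M k ζ * (1 + (k:ℝ)^2 + ζ^2) ^ (N/2) with hf
  set f' : ℝ → ℝ := fun ζ => deriv (M k) ζ * (1 + (k:ℝ)^2 + ζ^2) ^ (N/2)
      + M k ζ * ((N/2) * (1 + (k:ℝ)^2 + ζ^2) ^ (N/2 - 1) * (2*ζ)) with hf'
  have hder : ∀ ζ, HasDerivAt f (f' ζ) ζ := by
    intro ζ
    have h1 : HasDerivAt (M k) (deriv (M k) ζ) ζ :=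
      (((hM k).differentiable one_ne_zero) ζ).hasDerivAt
    have h2 : HasDerivAt (fun ζ : ℝ => 1 + (k:ℝ)^2 + ζ^2) (2*ζ) ζ := by
      have := (hasDerivAt_pow 2 ζ).const_add (1 + (k:ℝ)^2)
      simpa [pow_one] using this
    have h3 : HasDerivAt (fun ζ : ℝ => (1 + (k:ℝ)^2 + ζ^2) ^ (N/2))
        ((N/2) * (1 + (k:ℝ)^2 + ζ^2) ^ (N/2 - 1) * (2*ζ)) ζ := by
      have hb := Real.hasDerivAt_rpow_const (x := 1 + (k:ℝ)^2 + ζ^2) (p := N/2)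
        (Or.inl (hw ζ).ne')
      exact (hb.comp ζ h2)
    exact h1.mul h3
  -- pointwise bound on the derivative
  set W : ℝ → ℝ := fun ζ => (1 + (k:ℝ)^2 + ζ^2) ^ (N/2) with hW
  have hWpos : ∀ ζ, 0 < W ζ := fun ζ => Real.rpow_pos_of_pos (hw ζ) _
  have key : ∀ ζ : ℝ, |(k:ℝ)| * |f' ζ| ≤ (C₀ + N) * W ζ := by
    intro ζ
    have hMpos := (hMrange k ζ).1
    have hMle := (hMrange k ζ).2
    have hD : |deriv (M k) ζ| * |(k:ℝ)| ≤ C₀ := by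
      have := hM' k hk ζ
      rw [div_eq_inv_mul] at this
      calc |deriv (M k) ζ| * |(k:ℝ)| ≤ (|(k:ℝ)|⁻¹ * C₀) * |(k:ℝ)| := by
            nlinarith [abs_nonneg (deriv (M k) ζ)]
        _ = C₀ := by field_simp
    have hkz : |(k:ℝ)| * |ζ| ≤ 1 + (k:ℝ)^2 + ζ^2 := by
      nlinarith [sq_nonneg (|(k:ℝ)| - |ζ|), sq_abs (k:ℝ), sq_abs ζ]
    have hpow : (1 + (k:ℝ)^2 + ζ^2) ^ (N/2 - 1) * (1 + (k:ℝ)^2 + ζ^2) = W ζ := by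
      rw [← Real.rpow_add_one (hw ζ).ne']
      simp only [sub_add_cancel, hW]
    have hpow_nonneg : (0:ℝ) ≤ (1 + (k:ℝ)^2 + ζ^2) ^ (N/2 - 1) :=
      (Real.rpow_pos_of_pos (hw ζ) _).le
    have htri : |f' ζ| ≤ |deriv (M k) ζ| * W ζ
        + M k ζ * (N * ((1 + (k:ℝ)^2 + ζ^2) ^ (N/2 - 1) * |ζ|)) := by
      refine (abs_add_le _ _).trans ?_
      have h1 : |W ζ| = W ζ := abs_of_pos (hWpos ζ)
      have h2 : |M k ζ| = M k ζ := abs_of_pos hMpos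
      have e2 : |M k ζ * ((N/2) * (1 + (k:ℝ)^2 + ζ^2) ^ (N/2 - 1) * (2*ζ))|
          = M k ζ * (N * ((1 + (k:ℝ)^2 + ζ^2) ^ (N/2 - 1) * |ζ|)) := by
        rw [abs_mul, abs_mul, abs_mul, abs_mul, h2,
          abs_of_nonneg (by linarith : (0:ℝ) ≤ N/2),
          abs_of_nonneg hpow_nonneg, abs_of_nonneg (by norm_num : (0:ℝ) ≤ 2)]
        ring
      rw [abs_mul, h1, e2]
    calc |(k:ℝ)| * |f' ζ| ≤ |(k:ℝ)| * (|deriv (M k) ζ| * W ζ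
          + M k ζ * (N * ((1 + (k:ℝ)^2 + ζ^2) ^ (N/2 - 1) * |ζ|))) := by
          exact mul_le_mul_of_nonneg_left htri (abs_nonneg _)
      _ = (|deriv (M k) ζ| * |(k:ℝ)|) * W ζ
          + M k ζ * N * ((1 + (k:ℝ)^2 + ζ^2) ^ (N/2 - 1) * (|(k:ℝ)| * |ζ|)) := by ring
      _ ≤ C₀ * W ζ + 1 * N * ((1 + (k:ℝ)^2 + ζ^2) ^ (N/2 - 1) * (1 + (k:ℝ)^2 + ζ^2)) := by
          gcongr
      _ = (C₀ + N) * W ζ := by rw [hpow]; ring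
  -- monotonicity of W on the interval
  have hWmono : ∀ ζ ∈ uIcc (ξ - η) ξ, W ζ ≤ W (ξ - η) + W ξ := by
    intro ζ hζ
    rw [uIcc_eq_union] at hζ
    have habs : |ζ| ≤ max |ξ - η| |ξ| := by
      rcases hζ with h | h
      · exact abs_le_max_abs_abs h.1 h.2
      · exact (abs_le_max_abs_abs h.1 h.2).trans (by rw [max_comm])
    rcases le_max_iff.mp habs with h | h
    · have : W ζ ≤ W (ξ - η) := by
        apply Real.rpow_le_rpow (hw ζ).le _ (by linarith)
        nlinarith [sq_abs ζ, sq_abs (ξ - η), abs_nonneg ζ, abs_nonneg (ξ - η)]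
      linarith [(hWpos ξ).le]
    · have : W ζ ≤ W ξ := by
        apply Real.rpow_le_rpow (hw ζ).le _ (by linarith)
        nlinarith [sq_abs ζ, sq_abs ξ, abs_nonneg ζ, abs_nonneg ξ]
      linarith [(hWpos (ξ - η)).le]
  -- MVT
  have hB : ∀ ζ ∈ uIcc (ξ - η) ξ, ‖f' ζ‖ ≤ (C₀ + N) * (W (ξ - η) + W ξ) / |(k:ℝ)| := by
    intro ζ hζ
    rw [Real.norm_eq_abs, le_div_iff₀ hkpos]
    calc |f' ζ| * |(k:ℝ)| = |(k:ℝ)| * |f' ζ| := by ring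
      _ ≤ (C₀ + N) * W ζ := key ζ
      _ ≤ (C₀ + N) * (W (ξ - η) + W ξ) := by
          apply mul_le_mul_of_nonneg_left (hWmono ζ hζ) (by linarith)
  have hmvt := Convex.norm_image_sub_le_of_norm_hasDerivWithin_le
    (fun x hx => (hder x).hasDerivWithinAt) hB (convex_uIcc _ _)
    (left_mem_uIcc) (right_mem_uIcc)
  rw [Real.norm_eq_abs, Real.norm_eq_abs] at hmvt
  have hsub : ξ - (ξ - η) = η := by ring
  rw [hsub] at hmvt
  have : |(k:ℝ)| * |f ξ - f (ξ - η)| ≤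
      |(k:ℝ)| * ((C₀ + N) * (W (ξ - η) + W ξ) / |(k:ℝ)| * |η|) :=
    mul_le_mul_of_nonneg_left hmvt (abs_nonneg _)
  calc |(k:ℝ)| * |M k ξ * (1 + (k:ℝ)^2 + ξ^2) ^ (N/2)
        - M k (ξ - η) * (1 + (k:ℝ)^2 + (ξ - η)^2) ^ (N/2)|
      = |(k:ℝ)| * |f ξ - f (ξ - η)| := rfl
    _ ≤ |(k:ℝ)| * ((C₀ + N) * (W (ξ - η) + W ξ) / |(k:ℝ)| * |η|) := this
    _ = (C₀ + N) * (W (ξ - η) + W ξ) * |η| := by field_simp
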